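/- With J_k(λ) = ∫_0^∞ u^k exp(-u - u²/(2λ²)) du, for every λ > 0: J_2(λ)/J_0(λ) ≤ 1/(1/2 + 1/λ²) and J_2(λ)/J_0(λ) ≥ 1/(1/2 + 3/(2λ²) + 1/λ²). -/

import Mathlib

open MeasureTheory Set Filter Topology

noncomputable def J (k : ℕ) (lam : ℝ) : ℝ :=
  ∫ u in Set.Ioi (0:ℝ), u^k * Real.exp (-u - u^2/(2*lam^2))

lemma Jcont (k : ℕ) (lam : ℝ) :
    Continuous (fun u : ℝ => u^k * Real.exp (-u - u^2/(2*lam^2))) := by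
  exact (continuous_pow k).mul ((Real.continuous_exp).comp (by continuity))

lemma Jint (k : ℕ) {lam : ℝ} (hlam : 0 < lam) :
    IntegrableOn (fun u : ℝ => u^k * Real.exp (-u - u^2/(2*lam^2))) (Ioi 0) := by
  have hb : (0:ℝ) < 1/(2*lam^2) := by positivity
  have hg : IntegrableOn (fun u : ℝ => u ^ (k:ℝ) * Real.exp (-(1/(2*lam^2)) * u^2)) (Ioi 0) :=
    integrableOn_rpow_mul_exp_neg_mul_sq hb ((neg_lt_zero.mpr one_pos).trans_le (Nat.cast_nonneg k))
  refine hg.mono' ((Jcont k lam).aestronglyMeasurable) ?_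
  filter_upwards [ae_restrict_mem measurableSet_Ioi] with u hu
  have hu0 : (0:ℝ) < u := hu
  rw [Real.norm_eq_abs, abs_mul, abs_of_pos (pow_pos hu0 k), Real.abs_exp,
    Real.rpow_natCast]
  have h1 : -u - u^2/(2*lam^2) ≤ -(1/(2*lam^2)) * u^2 := by
    have h : u^2/(2*lam^2) = (1/(2*lam^2))*u^2 := by ring
    linarith
  exact mul_le_mul_of_nonneg_left (Real.exp_le_exp.2 h1) (pow_pos hu0 k).le

lemma Jpos (k : ℕ) {lam : ℝ} (hlam : 0 < lam) : 0 < J k lam := by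
  rw [J]
  have hnn : (0:ℝ→ℝ) ≤ᵐ[volume.restrict (Ioi 0)]
      (fun u : ℝ => u^k * Real.exp (-u - u^2/(2*lam^2))) := by
    filter_upwards [ae_restrict_mem measurableSet_Ioi] with u hu
    have : (0:ℝ) < u := hu
    positivity
  rw [setIntegral_pos_iff_support_of_nonneg_ae hnn (Jint k hlam)]
  have hsub : Ioi (0:ℝ) ⊆ Function.support (fun u : ℝ => u^k * Real.exp (-u - u^2/(2*lam^2))) := by
    intro u hu
    have : (0:ℝ) < u := hu
    simp only [Function.mem_support]
    positivity
  rw [inter_eq_right.2 hsub]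
  simp [Real.volume_Ioi]

lemma Jrec (k : ℕ) {lam : ℝ} (hlam : 0 < lam) :
    ((k:ℝ)+1) * J k lam = J (k+1) lam + J (k+2) lam / lam^2 := by
  have hL : (0:ℝ) < lam^2 := by positivity
  set E : ℝ → ℝ := fun u => Real.exp (-u - u^2/(2*lam^2)) with hE
  set f' : ℝ → ℝ := fun x => ((k:ℝ)+1) * (x^k * E x) - x^(k+1) * E x - x^(k+2) * E x / lam^2
    with hf'
  have hcont : ContinuousWithinAt (fun u : ℝ => u^(k+1) * E u) (Ici 0) 0 :=
    (Jcont (k+1) lam).continuousWithinAt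
  have hderiv : ∀ x ∈ Ioi (0:ℝ), HasDerivAt (fun u : ℝ => u^(k+1) * E u) (f' x) x := by
    intro x _
    have h1 : HasDerivAt (fun u : ℝ => u^(k+1)) (((k:ℝ)+1) * x^k) x := by
      simpa using hasDerivAt_pow (k+1) x
    have h2 : HasDerivAt (fun u : ℝ => -u - u^2/(2*lam^2)) (-1 - 2*x^1/(2*lam^2)) x :=
      (hasDerivAt_id x).neg.sub ((hasDerivAt_pow 2 x).div_const (2*lam^2))
    have h3 : HasDerivAt E (Real.exp (-x - x^2/(2*lam^2)) * (-1 - 2*x^1/(2*lam^2))) x := h2.exp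
    have h4 : HasDerivAt (fun u : ℝ => u^(k+1) * E u) _ x := h1.mul h3
    convert h4 using 1
    simp only [hf', hE]
    field_simp
    ring
  have i1 : IntegrableOn (fun x : ℝ => ((k:ℝ)+1) * (x^k * E x)) (Ioi 0) :=
    (Jint k hlam).const_mul _
  have i2 : IntegrableOn (fun x : ℝ => x^(k+1) * E x) (Ioi 0) := Jint (k+1) hlam
  have i3 : IntegrableOn (fun x : ℝ => x^(k+2) * E x / lam^2) (Ioi 0) :=
    (Jint (k+2) hlam).div_const _
  have i12 : IntegrableOn (fun x : ℝ => ((k:ℝ)+1) * (x^k * E x) - x^(k+1) * E x) (Ioi 0) :=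
    i1.sub i2
  have hint : IntegrableOn f' (Ioi 0) := i12.sub i3
  have htend : Tendsto (fun u : ℝ => u^(k+1) * E u) atTop (𝓝 0) := by
    apply squeeze_zero' (g := fun u : ℝ => u^(k+1) * Real.exp (-u))
    · filter_upwards [eventually_ge_atTop (0:ℝ)] with u hu
      have : (0:ℝ) ≤ E u := (Real.exp_pos _).le
      positivity
    · filter_upwards [eventually_ge_atTop (0:ℝ)] with u hu
      have h1 : -u - u^2/(2*lam^2) ≤ -u := by
        have : (0:ℝ) ≤ u^2/(2*lam^2) := by positivity
        linarith
      exact mul_le_mul_of_nonneg_left (Real.exp_le_exp.2 h1) (pow_nonneg hu _)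
    · exact Real.tendsto_pow_mul_exp_neg_atTop_nhds_zero (k+1)
  have key := integral_Ioi_of_hasDerivAt_of_tendsto hcont hderiv hint htend
  simp only [zero_pow (Nat.succ_ne_zero k), zero_mul, sub_zero] at key
  rw [hf'] at key
  beta_reduce at key
  rw [integral_sub i12 i3, integral_sub i1 i2, integral_const_mul, integral_div] at key
  simp only [hE] at key
  simp only [J]
  linarith [key]

theorem stmt3 (lam : ℝ) (hlam : 0 < lam) :
    J 2 lam / J 0 lam ≤ 1 / (1/2 + 1/lam^2) ∧
    1 / (1/2 + 3/(2*lam^2) + 1/lam^2) ≤ J 2 lam / J 0 lam := by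
  have hL : (0:ℝ) < lam^2 := by positivity
  have h0 := Jrec 0 hlam
  have h1 := Jrec 1 hlam
  have h2 := Jrec 2 hlam
  norm_num at h0 h1 h2
  have p0 := Jpos 0 hlam
  have p2 := Jpos 2 hlam
  have p3 := (Jpos 3 hlam).le
  have p4 := (Jpos 4 hlam).le
  -- cleared versions
  have e0 : J 0 lam * lam^2 = J 1 lam * lam^2 + J 2 lam := by
    field_simp at h0; linarith
  have e1 : 2 * J 1 lam * lam^2 = J 2 lam * lam^2 + J 3 lam := by
    field_simp at h1; linarith
  have e2 : 3 * J 2 lam * lam^2 = J 3 lam * lam^2 + J 4 lam := by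
    field_simp at h2; linarith
  constructor
  · rw [div_le_div_iff₀ p0 (by positivity), ← mul_le_mul_iff_of_pos_right hL]
    have key : J 2 lam * lam^2 ≤ 2 * J 1 lam * lam^2 := by linarith
    have expand : J 2 lam * (1/2 + 1/lam^2) * lam^2 = J 2 lam * lam^2 / 2 + J 2 lam := by
      field_simp
    rw [expand]
    linarith [key, e0]
  · rw [div_le_div_iff₀ (by positivity) p0, ← mul_le_mul_iff_of_pos_right hL]
    have h32 : J 3 lam ≤ 3 * J 2 lam :=
      (mul_le_mul_iff_of_pos_right hL).mp (by linarith)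
    have expand : J 2 lam * (1/2 + 3/(2*lam^2) + 1/lam^2) * lam^2
        = J 2 lam * lam^2 / 2 + 3 * J 2 lam / 2 + J 2 lam := by
      field_simp
    rw [expand]
    linarith [e0, e1, h32]
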